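/- Let q = p^k be a prime power and let n = n'·p^i with i ≥ 0, gcd(n', p) = 1, and n' not dividing q−1. Let d > 2 be the multiplicative order of q modulo n', and let s be the number of monic irreducible factors of x^{n'}−1 over F_q of degree exactly d. Set δ = 1 − s/q^d and Δ = (s−1)/δ + 2. Then δ > 0 and Δ < 2n'. -/

import Mathlib

open Polynomial

noncomputable section

/-- A primitive element of a finite field: a generator of the multiplicative group,
i.e. an element of multiplicative order `|F| - 1`. -/
def IsPrimitiveElem {F : Type} [Monoid F] [Fintype F] (a : F) : Prop :=
  orderOf a = Fintype.card F - 1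

/-- `a` is normal over `Fq`: its conjugates `a^(q^i)`, `0 ≤ i < n`, form a basis of `F`
as an `Fq`-vector space. -/
def IsNormalElem (q n : ℕ) (Fq : Type) {F : Type} [Field Fq] [Field F] [Algebra Fq F]
    (a : F) : Prop :=
  LinearIndependent Fq (fun i : Fin n => a ^ q ^ (i : ℕ)) ∧
    Submodule.span Fq (Set.range fun i : Fin n => a ^ q ^ (i : ℕ)) = ⊤

/-- The norm from `F_{q^n}` to `F_q`: the product of the conjugates
`a · a^q ⋯ a^{q^{n-1}}`. -/
def normMap (q n : ℕ) {F : Type} [CommMonoid F] (a : F) : F :=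
  ∏ i ∈ Finset.range n, a ^ q ^ i

/-- `W r`: the number of squarefree positive divisors of `r`. -/
def Wnat (r : ℕ) : ℕ := Set.ncard {d : ℕ | d ∣ r ∧ Squarefree d}

/-- `W f`: the number of monic squarefree divisors of the polynomial `f`. -/
def Wpoly {Fq : Type} [Field Fq] (f : Fq[X]) : ℕ :=
  Set.ncard {h : Fq[X] | h.Monic ∧ Squarefree h ∧ h ∣ f}

/-- The largest divisor of `N` coprime to `kk`. -/
def Ldiv (N kk : ℕ) : ℕ := sSup {d : ℕ | d ∣ N ∧ Nat.Coprime d kk}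

/-- `a` is `e`-free: `a = γ^d` with `d` a positive divisor of `e` forces `d = 1`. -/
def IsEFree (e : ℕ) {F : Type} [Monoid F] (a : F) : Prop :=
  ∀ d : ℕ, 0 < d → d ∣ e → (∃ γ : F, a = γ ^ d) → d = 1

/-- The `F_q[x]`-module action on `F_{q^n}`: `f ∘ a = Σ aᵢ a^{q^i}`. -/
def polyAct (q : ℕ) {Fq F : Type} [Field Fq] [Field F] [Algebra Fq F]
    (f : Fq[X]) (a : F) : F :=
  f.sum fun i cc => cc • a ^ q ^ i

/-- `a` is `g`-free: `a = h ∘ γ` with `h` a monic divisor of `g` forces `h = 1`. -/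
def IsGFree (q : ℕ) {Fq F : Type} [Field Fq] [Field F] [Algebra Fq F]
    (g : Fq[X]) (a : F) : Prop :=
  ∀ h : Fq[X], h.Monic → h ∣ g → (∃ γ : F, a = polyAct q h γ) → h = 1

/-- `Ψ(f₁,…,f_m, g, j)`: the number of `α ∈ F_{q^n}^*` such that `α+(i-1)β` is `fᵢ`-free
with norm `cᵢ` for all `i`, and `α+(j-1)β` is `g`-free. -/
def Psi (q n m : ℕ) {Fq F : Type} [Field Fq] [Field F] [Algebra Fq F]
    (β : F) (c : Fin m → Fq) (f : Fin m → ℕ) (g : Fq[X]) (j : Fin m) : ℕ :=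
  Set.ncard {α : F | α ≠ 0 ∧
    (∀ i : Fin m, IsEFree (f i) (α + (i : ℕ) • β)) ∧
    IsGFree q g (α + (j : ℕ) • β) ∧
    ∀ i : Fin m, normMap q n (α + (i : ℕ) • β) = algebraMap Fq F (c i)}

/-- `Ψ(f₁,…,f_m, g)`: as `Psi`, but `α+(j-1)β` is `g`-free for at least one `j`. -/
def PsiAny (q n m : ℕ) {Fq F : Type} [Field Fq] [Field F] [Algebra Fq F]
    (β : F) (c : Fin m → Fq) (f : Fin m → ℕ) (g : Fq[X]) : ℕ :=
  Set.ncard {α : F | α ≠ 0 ∧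
    (∀ i : Fin m, IsEFree (f i) (α + (i : ℕ) • β)) ∧
    (∃ j : Fin m, IsGFree q g (α + (j : ℕ) • β)) ∧
    ∀ i : Fin m, normMap q n (α + (i : ℕ) • β) = algebraMap Fq F (c i)}

/-- `θ(e) = φ(e)/e`. -/
def theta (e : ℕ) : ℝ := (Nat.totient e : ℝ) / (e : ℝ)

/-- `Φ_q(g) = |(F_q[x]/(g))ˣ|`. -/
def PhiQ {Fq : Type} [Field Fq] (g : Fq[X]) : ℕ :=
  Nat.card ((Fq[X] ⧸ Ideal.span {g})ˣ)

/-- `Θ(g) = Φ_q(g)/q^{deg g}`. -/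
def ThetaPoly (q : ℕ) {Fq : Type} [Field Fq] (g : Fq[X]) : ℝ :=
  (PhiQ g : ℝ) / (q : ℝ) ^ g.natDegree

/-- The canonical additive character `x ↦ exp(2πi·Tr_{F/F_p}(x)/p)`. -/
def canonChar (p : ℕ) {F : Type} [Field F] [Algebra (ZMod p) F] (x : F) : ℂ :=
  Complex.exp (2 * Real.pi * Complex.I * ((Algebra.trace (ZMod p) F x).val : ℂ) / (p : ℂ))

end

open Polynomial UniqueFactorizationMonoid

lemma multiset_sum_le_of_le (s t : Multiset ℕ) (h : s ≤ t) : s.sum ≤ t.sum := by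
  obtain ⟨u, rfl⟩ := Multiset.le_iff_exists_add.mp h
  simp

lemma count_deg_factors {Fq : Type} [Field Fq] (f : Fq[X]) (hfm : f.Monic) (d : ℕ)
    (hd : 0 < d) :
    Set.ncard {h : Fq[X] | h.Monic ∧ Irreducible h ∧ h ∣ f ∧ h.natDegree = d} * d
      ≤ f.natDegree := by
  classical
  have hf0 : f ≠ 0 := hfm.ne_zero
  have hmono : ∀ h ∈ normalizedFactors f, Polynomial.Monic h := by
    intro h hh
    have h0 : h ≠ 0 := (prime_of_normalized_factor h hh).ne_zero
    rw [← normalize_normalized_factor h hh]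
    exact monic_normalize h0
  set T : Finset Fq[X] := (normalizedFactors f).toFinset.filter (fun h => h.natDegree = d)
    with hT
  have hset : {h : Fq[X] | h.Monic ∧ Irreducible h ∧ h ∣ f ∧ h.natDegree = d} = ↑T := by
    ext h
    simp only [hT, Finset.coe_filter, Multiset.mem_toFinset, Set.mem_setOf_eq]
    constructor
    · rintro ⟨hm, hirr, hdvd, hdeg⟩
      refine ⟨?_, hdeg⟩
      obtain ⟨g, hgmem, hassoc⟩ := exists_mem_normalizedFactors_of_dvd hf0 hirr hdvd
      rwa [Polynomial.eq_of_monic_of_associated hm (hmono g hgmem) hassoc]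
    · rintro ⟨hmem, hdeg⟩
      exact ⟨hmono h hmem, irreducible_of_normalized_factor h hmem,
        dvd_of_mem_normalizedFactors hmem, hdeg⟩
  rw [hset, Set.ncard_coe_finset]
  have h1 : T.card * d = ∑ h ∈ T, h.natDegree := by
    rw [Finset.sum_congr rfl (fun h hh => (Finset.mem_filter.mp hh).2)]
    simp [mul_comm]
    left; rw [hT, UniqueFactorizationMonoid.toFinset_normalizedFactors]
  have h2 : ∑ h ∈ T, h.natDegree ≤ ((normalizedFactors f).map Polynomial.natDegree).sum := by
    calc ∑ h ∈ T, h.natDegree ≤ ∑ h ∈ (normalizedFactors f).toFinset, h.natDegree :=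
          Finset.sum_le_sum_of_subset (Finset.filter_subset _ _)
      _ = ((normalizedFactors f).dedup.map Polynomial.natDegree).sum := rfl
      _ ≤ _ := multiset_sum_le_of_le _ _ (Multiset.map_le_map (Multiset.dedup_le _))
  have h3 : ((normalizedFactors f).map Polynomial.natDegree).sum
      = (normalizedFactors f).prod.natDegree :=
    (Polynomial.natDegree_multiset_prod_of_monic _ hmono).symm
  have hpm : (normalizedFactors f).prod.Monic := by
    have := Polynomial.monic_multiset_prod_of_monic (normalizedFactors f) id hmono
    simpa using this
  have h4 : (normalizedFactors f).prod = f :=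
    Polynomial.eq_of_monic_of_associated hpm hfm (prod_normalizedFactors hf0)
  rw [h4] at h3
  rw [h1]
  omega

/-- Lemma 6.4: bound on Δ for the degree-`d` sieve. -/
theorem delta_sieve_bound
    (p kk q : ℕ) (hp : p.Prime) (hq : q = p ^ kk) (hk : 1 ≤ kk)
    (n n' i : ℕ) (hnn : n = n' * p ^ i) (hcop : Nat.Coprime n' p) (hndvd : ¬ n' ∣ q - 1)
    (Fq : Type) [Field Fq] [Fintype Fq] (hcardq : Fintype.card Fq = q)
    (d : ℕ) (hd : d = orderOf (q : ZMod n')) (hd2 : 2 < d)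
    (s : ℕ)
    (hs : s = Set.ncard {h : Fq[X] | h.Monic ∧ Irreducible h ∧
      h ∣ (X : Fq[X]) ^ n' - 1 ∧ h.natDegree = d})
    (δ Δ : ℝ) (hδ : δ = 1 - (s : ℝ) / (q : ℝ) ^ d) (hΔ : Δ = ((s : ℝ) - 1) / δ + 2) :
    0 < δ ∧ Δ < 2 * (n' : ℝ) := by
  have hq2 : 2 ≤ q := by
    have : p ≤ p ^ kk := Nat.le_self_pow (by omega) p
    have := hp.two_le
    omega
  have hn'2 : 2 ≤ n' := by
    rcases Nat.lt_or_ge n' 2 with h | h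
    · interval_cases n'
      · rw [Nat.coprime_zero_left] at hcop
        exact absurd hcop hp.one_lt.ne'
      · exact absurd (one_dvd _) hndvd
    · exact h
  -- q^d ≥ n' + 1
  have hQn : n' + 1 ≤ q ^ d := by
    have h1 : ((q : ZMod n')) ^ d = 1 := hd ▸ pow_orderOf_eq_one _
    have h2 : ((q ^ d : ℕ) : ZMod n') = ((1 : ℕ) : ZMod n') := by push_cast; simpa using h1
    have h3 : (1 : ℕ) ≡ q ^ d [MOD n'] := ((ZMod.natCast_eq_natCast_iff _ _ _).mp h2).symm
    have hqd1 : 1 ≤ q ^ d := Nat.one_le_pow _ _ (by omega)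
    have h4 : n' ∣ q ^ d - 1 := (Nat.modEq_iff_dvd' hqd1).mp h3
    have hqd2 : 2 ≤ q ^ d := by
      calc 2 = 2 ^ 1 := rfl
        _ ≤ q ^ d := Nat.pow_le_pow_left hq2 1 |>.trans (Nat.pow_le_pow_right (by omega) (by omega))
    have := Nat.le_of_dvd (by omega) h4
    omega
  -- s * d ≤ n'
  have hfm : ((X : Fq[X]) ^ n' - 1).Monic := by
    simpa using Polynomial.monic_X_pow_sub_C (1 : Fq) (show n' ≠ 0 by omega)
  have hsd : s * d ≤ n' := by
    have := count_deg_factors ((X : Fq[X]) ^ n' - 1) hfm d (by omega)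
    rw [← hs] at this
    have hdeg : ((X : Fq[X]) ^ n' - 1).natDegree = n' := by
      simpa using Polynomial.natDegree_X_pow_sub_C (n := n') (r := (1 : Fq))
    omega
  have h3s : 3 * s ≤ n' := le_trans (by nlinarith) hsd
  -- real arithmetic
  have hQpos : (0:ℝ) < (q:ℝ) ^ d := by positivity
  have hsQ : 3 * (s:ℝ) ≤ (n':ℝ) := by exact_mod_cast h3s
  have hQ : (n':ℝ) + 1 ≤ (q:ℝ) ^ d := by exact_mod_cast hQn
  have hn'R : (2:ℝ) ≤ (n':ℝ) := by exact_mod_cast hn'2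
  have hs0 : (0:ℝ) ≤ (s:ℝ) := Nat.cast_nonneg s
  have hδpos : 0 < δ := by
    rw [hδ, sub_pos, div_lt_one hQpos]; linarith
  refine ⟨hδpos, ?_⟩
  have hδQ : δ * (q:ℝ) ^ d = (q:ℝ) ^ d - s := by
    rw [hδ]; field_simp
  have key2 : ((s:ℝ) - 1) * ((q:ℝ) ^ d) < (2 * (n':ℝ) - 2) * ((q:ℝ) ^ d - s) := by
    nlinarith [mul_nonneg (by linarith : (0:ℝ) ≤ (n':ℝ) - 3 * s) hQpos.le,
      mul_nonneg (by linarith : (0:ℝ) ≤ (n':ℝ) - 3 * s) (by linarith : (0:ℝ) ≤ (n':ℝ)),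
      mul_nonneg (by linarith : (0:ℝ) ≤ (q:ℝ) ^ d - (n':ℝ) - 1)
        (by linarith : (0:ℝ) ≤ 5 * (n':ℝ) - 3)]
  have key : (s:ℝ) - 1 < (2 * (n':ℝ) - 2) * δ := by
    have h5 : ((s:ℝ) - 1) * ((q:ℝ) ^ d) < ((2 * (n':ℝ) - 2) * δ) * ((q:ℝ) ^ d) := by
      rw [mul_assoc, hδQ]; linarith
    exact lt_of_mul_lt_mul_right h5 hQpos.le
  rw [hΔ]
  have := (div_lt_iff₀ hδpos).mpr key
  linarith
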